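/- arXiv:1911.00130 — 9 statements merged into one kernel-verified Lean document; each statement's English description precedes it below -/
import Mathlib

section
/- Let G, M be abelian groups and (h, c) an abelian 3-cocycle on G with values in M. Then the alternating sum over all six permutations σ of the arguments, ∑_{σ ∈ S₃} sgn(σ)·h(x_{σ(1)}, x_{σ(2)}, x_{σ(3)}), equals zero for all x₁, x₂, x₃ ∈ G. -/
/-- For an abelian 3-cocycle `(h, c)`, the alternating sum of `h` over all six
permutations of the arguments vanishes. -/
theorem stmt_8 {G M : Type*} [AddCommGroup G] [AddCommGroup M]
    (h : G → G → G → M) (c : G → G → M)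
    (hcoc : ∀ u x y z : G,
      h x y z + h u (x + y) z + h u x y = h u x (y + z) + h (u + x) y z)
    (hnorm : ∀ x z : G, h x 0 z = 0)
    (hA : ∀ x y z : G,
      h y z x + c x (y + z) + h x y z = c x z + h y x z + c x y)
    (hA' : ∀ x y z : G,
      -h z x y + c (x + y) z - h x y z = c x z - h x z y + c y z) :
    ∀ x y z : G,
      h x y z + h y z x + h z x y - h y x z - h x z y - h z y x = 0 := by
  intro x y z
  have h1 := hA x y z
  have h2 := hA x z y
  rw [add_comm z y] at h2
  linear_combination (norm := abel) h1 - h2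
end

section
/- Let G, M be abelian groups and (h, c) an abelian 3-cocycle on G with values in M. Then W(x,y) := c(x,y) + c(y,x) is Z-bilinear and symmetric. -/
/-- For an abelian 3-cocycle `(h, c)`, the map `W(x,y) := c(x,y) + c(y,x)` is
ℤ-bilinear and symmetric. -/
theorem stmt_9 {G M : Type*} [AddCommGroup G] [AddCommGroup M]
    (h : G → G → G → M) (c : G → G → M)
    (hcoc : ∀ u x y z : G,
      h x y z + h u (x + y) z + h u x y = h u x (y + z) + h (u + x) y z)
    (hnorm : ∀ x z : G, h x 0 z = 0)
    (hA : ∀ x y z : G,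
      h y z x + c x (y + z) + h x y z = c x z + h y x z + c x y)
    (hA' : ∀ x y z : G,
      -h z x y + c (x + y) z - h x y z = c x z - h x z y + c y z) :
    (∀ x y : G, c x y + c y x = c y x + c x y) ∧
    (∀ x x' y : G,
      c (x + x') y + c y (x + x') = (c x y + c y x) + (c x' y + c y x')) ∧
    (∀ x y y' : G,
      c x (y + y') + c (y + y') x = (c x y + c y x) + (c x y' + c y' x)) := by
  refine ⟨fun x y => add_comm _ _, fun x x' y => ?_, fun x y y' => ?_⟩
  · linear_combination (norm := abel) hA' x x' y + hA y x x'
  · linear_combination (norm := abel) hA x y y' + hA' y y' x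
end

section
/- Let G, M be abelian groups and (h, c) an abelian 3-cocycle on G with values in M. Then for all y, z ∈ G: c(y+z, y+z) - c(y,y) - c(z,z) = c(y,z) + c(z,y). -/
/-- For an abelian 3-cocycle `(h, c)`:
`c(y+z, y+z) - c(y,y) - c(z,z) = c(y,z) + c(z,y)`. -/
theorem stmt_10 {G M : Type*} [AddCommGroup G] [AddCommGroup M]
    (h : G → G → G → M) (c : G → G → M)
    (hcoc : ∀ u x y z : G,
      h x y z + h u (x + y) z + h u x y = h u x (y + z) + h (u + x) y z)
    (hnorm : ∀ x z : G, h x 0 z = 0)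
    (hA : ∀ x y z : G,
      h y z x + c x (y + z) + h x y z = c x z + h y x z + c x y)
    (hA' : ∀ x y z : G,
      -h z x y + c (x + y) z - h x y z = c x z - h x z y + c y z) :
    ∀ y z : G, c (y + z) (y + z) - c y y - c z z = c y z + c z y := by
  intro y z
  have E1 := hA' y z (y + z)
  have E2 := hA y y z
  have E3 := hA z y z
  have E4 := hcoc y z y z
  rw [add_comm z y] at E4
  linear_combination (norm := abel) E1 + E2 + E3 - E4
end

section
/- Let G, M be abelian groups and (h, c) an abelian 3-cocycle on G with values in M. Then the trace q(x) := c(x,x) is a quadratic form, i.e., q(-x) = q(x) for all x ∈ G and b(x,y) := q(x+y) - q(x) - q(y) is Z-bilinear. -/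
/-- For an abelian 3-cocycle `(h, c)`, the trace `q(x) := c(x,x)` is a quadratic
form: `q(-x) = q(x)` and the polarization `b(x,y) := q(x+y) - q(x) - q(y)` is
ℤ-bilinear (additive in each variable). -/
theorem stmt_11 {G M : Type*} [AddCommGroup G] [AddCommGroup M]
    (h : G → G → G → M) (c : G → G → M)
    (hcoc : ∀ u x y z : G,
      h x y z + h u (x + y) z + h u x y = h u x (y + z) + h (u + x) y z)
    (hnorm : ∀ x z : G, h x 0 z = 0)
    (hA : ∀ x y z : G,
      h y z x + c x (y + z) + h x y z = c x z + h y x z + c x y)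
    (hA' : ∀ x y z : G,
      -h z x y + c (x + y) z - h x y z = c x z - h x z y + c y z) :
    (∀ x : G, c (-x) (-x) = c x x) ∧
    (∀ x x' y : G,
      (c (x + x' + y) (x + x' + y) - c (x + x') (x + x') - c y y)
        = (c (x + y) (x + y) - c x x - c y y)
          + (c (x' + y) (x' + y) - c x' x' - c y y)) ∧
    (∀ x y y' : G,
      (c (x + (y + y')) (x + (y + y')) - c x x - c (y + y') (y + y'))
        = (c (x + y) (x + y) - c x x - c y y)
          + (c (x + y') (x + y') - c x x - c y' y')) := by
  -- h with first argument 0 vanishes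
  have hzero : ∀ y z : G, h 0 y z = 0 := by
    intro y z
    have e := hcoc 0 0 y z
    simp only [zero_add, hnorm] at e
    linear_combination (norm := abel) e
  -- c with second argument 0 vanishes
  have cx0 : ∀ x : G, c x 0 = 0 := by
    intro x
    have e := hA x 0 0
    simp only [add_zero, hnorm, hzero] at e
    linear_combination (norm := abel) -e
  -- c with first argument 0 vanishes
  have c0x : ∀ z : G, c 0 z = 0 := by
    intro z
    have e := hA' 0 0 z
    simp only [add_zero, zero_add, hnorm, hzero] at e
    linear_combination (norm := abel) -e
  -- h with last argument 0 vanishes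
  have hzero3 : ∀ u x : G, h u x 0 = 0 := by
    intro u x
    have e := hcoc u x 0 0
    simp only [add_zero, hnorm, hzero] at e
    linear_combination (norm := abel) e
  -- key: the polarization equals c x y + c y x
  have key : ∀ x y : G,
      c (x + y) (x + y) - c x x - c y y = c x y + c y x := by
    intro x y
    have E1 := hA' x y (x + y)
    have E2 := hA x x y
    have E3 := hA y x y
    have E4 := hcoc x y x y
    rw [add_comm y x] at E4
    linear_combination (norm := abel) E1 + E2 + E3 - E4
  refine ⟨?_, ?_, ?_⟩
  · intro x
    have e1 := hA' x (-x) (-x)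
    rw [add_neg_cancel] at e1
    have e2 := hA x x (-x)
    rw [add_neg_cancel] at e2
    have e3 := hcoc x (-x) x (-x)
    rw [neg_add_cancel, add_neg_cancel] at e3
    simp only [c0x, cx0, hnorm, hzero, hzero3] at e1 e2 e3
    linear_combination (norm := abel) -e1 + e2 - e3
  · intro x x' y
    have F1 := hA' x x' y
    have F2 := hA y x x'
    linear_combination (norm := abel) key (x + x') y + F1 + F2
      - key x y - key x' y
  · intro x y y'
    have G1 := hA x y y'
    have G2 := hA' y y' x
    linear_combination (norm := abel) key x (y + y') + G1 + G2
      - key x y - key x y'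
end

section
/- Let G, M be abelian groups and (h, c) an abelian 3-cocycle on G with values in M, with trace q(x) := c(x,x). Then q(x) + q(-x) = c(x,x) + c(x,x) = 2q(x), and q(-x) = q(x) for all x ∈ G. -/
/-- For an abelian 3-cocycle `(h, c)` with trace `q(x) := c(x,x)`:
`q(x) + q(-x) = c(x,x) + c(x,x) = 2q(x)` and `q(-x) = q(x)`. -/
theorem stmt_12 {G M : Type*} [AddCommGroup G] [AddCommGroup M]
    (h : G → G → G → M) (c : G → G → M)
    (hcoc : ∀ u x y z : G,
      h x y z + h u (x + y) z + h u x y = h u x (y + z) + h (u + x) y z)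
    (hnorm : ∀ x z : G, h x 0 z = 0)
    (hA : ∀ x y z : G,
      h y z x + c x (y + z) + h x y z = c x z + h y x z + c x y)
    (hA' : ∀ x y z : G,
      -h z x y + c (x + y) z - h x y z = c x z - h x z y + c y z) :
    ∀ x : G,
      c x x + c (-x) (-x) = c x x + c x x ∧
      c x x + c (-x) (-x) = (2 : ℤ) • c x x ∧
      c (-x) (-x) = c x x := by
  -- h vanishes when the last slot is 0
  have hR0 : ∀ u x : G, h u x 0 = 0 := by
    intro u x
    have := hcoc u x 0 0
    simp only [hnorm, add_zero, zero_add] at this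
    exact add_eq_right.mp this
  -- h vanishes when the first slot is 0
  have hL0 : ∀ y z : G, h 0 y z = 0 := by
    intro y z
    have := hcoc 0 0 y z
    simp only [hnorm, zero_add, add_zero] at this
    exact add_eq_right.mp this
  -- c 0 z = 0
  have c0 : ∀ z : G, c 0 z = 0 := by
    intro z
    have := hA' 0 0 z
    simp only [hnorm, hL0, hR0, zero_add, add_zero, neg_zero, sub_zero] at this
    exact right_eq_add.mp this
  -- c z 0 = 0
  have cR0 : ∀ z : G, c z 0 = 0 := by
    intro z
    have := hA z 0 0
    simp only [hnorm, hL0, hR0, zero_add, add_zero] at this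
    exact right_eq_add.mp this
  intro x
  -- key identity B : -h x (-x) x = c x x + c (-x) x   (from hA' at (x, -x, x))
  have B : -h x (-x) x = c x x + c (-x) x := by
    have e := hA' x (-x) x
    rw [add_neg_cancel, c0] at e
    -- e : -h x x (-x) + 0 - h x (-x) x = c x x - h x x (-x) + c (-x) x
    calc -h x (-x) x = h x x (-x) + (-h x x (-x) + 0 - h x (-x) x) := by abel
      _ = h x x (-x) + (c x x - h x x (-x) + c (-x) x) := by rw [e]
      _ = c x x + c (-x) x := by abel
  -- key identity D : h (-x) x (-x) = c (-x) (-x) + c (-x) x   (from hA at (-x, x, -x))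
  have D : h (-x) x (-x) = c (-x) (-x) + c (-x) x := by
    have e := hA (-x) x (-x)
    rw [add_neg_cancel, cR0, add_zero] at e
    -- e : h x (-x) (-x) + h (-x) x (-x) = c (-x) (-x) + h x (-x) (-x) + c (-x) x
    calc h (-x) x (-x)
        = (h x (-x) (-x) + h (-x) x (-x)) - h x (-x) (-x) := by abel
      _ = (c (-x) (-x) + h x (-x) (-x) + c (-x) x) - h x (-x) (-x) := by rw [e]
      _ = c (-x) (-x) + c (-x) x := by abel
  -- key identity C : h (-x) x (-x) + h x (-x) x = 0  (from the cocycle identity)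
  have C : h (-x) x (-x) + h x (-x) x = 0 := by
    have e := hcoc x (-x) x (-x)
    rw [neg_add_cancel, add_neg_cancel, hnorm, hR0, hL0, add_zero, add_zero] at e
    exact e
  -- conclude: c (-x) (-x) = c x x
  have key : c (-x) (-x) = c x x := by
    have h1 : h (-x) x (-x) = -h x (-x) x := eq_neg_of_add_eq_zero_left C
    rw [B] at h1
    rw [h1] at D
    exact add_right_cancel D.symm
  exact ⟨by rw [key], by rw [key, two_zsmul], key⟩
end

section
/- Let G be a free abelian group and M any abelian group. Then every quadratic form q : G → M is polar: there exists a Z-bilinear form t : G × G → M with q(x+y) - q(x) - q(y) = t(x,y) + t(y,x) for all x, y ∈ G. -/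
/-- Over a free abelian group `G`, every quadratic form `q : G → M` is polar:
there is a ℤ-bilinear `t` with `q(x+y) - q(x) - q(y) = t(x,y) + t(y,x)`. -/
theorem stmt_15 {G M : Type*} [AddCommGroup G] [Module.Free ℤ G]
    [AddCommGroup M] (q : G → M)
    (hneg : ∀ x : G, q (-x) = q x)
    (hbil₁ : ∀ x x' y : G, (q (x + x' + y) - q (x + x') - q y)
        = (q (x + y) - q x - q y) + (q (x' + y) - q x' - q y))
    (hbil₂ : ∀ x y y' : G, (q (x + (y + y')) - q x - q (y + y'))
        = (q (x + y) - q x - q y) + (q (x + y') - q x - q y')) :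
    ∃ t : G → G → M,
      (∀ x x' y : G, t (x + x') y = t x y + t x' y) ∧
      (∀ x y y' : G, t x (y + y') = t x y + t x y') ∧
      (∀ x y : G, q (x + y) - q x - q y = t x y + t y x) := by
  classical
  have hq0 : q 0 = 0 := by
    have h := hbil₁ 0 0 0
    simp only [add_zero] at h
    have h2 : -q 0 = -q 0 + -q 0 := by
      have h3 := h
      abel_nf at h3 ⊢
      simpa using h3
    exact neg_eq_zero.mp (left_eq_add.mp h2)
  -- the polarization
  set b : G → G → M := fun x y => q (x + y) - q x - q y with hbdef
  have hbsymm : ∀ x y, b x y = b y x := fun x y => by simp only [hbdef, add_comm x y]; abel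
  have hbx0 : ∀ x, b x 0 = 0 := fun x => by simp [hbdef, hq0]
  have hdiag : ∀ x, b x x = q x + q x := by
    intro x
    have h := hbil₂ x x (-x)
    have h1 : b x 0 = b x x + b x (-x) := by simpa [hbdef] using h
    have h2 : b x (-x) = -(q x + q x) := by
      simp [hbdef, hq0, hneg x]
      abel
    rw [hbx0, h2] at h1
    have := h1.symm
    rw [add_neg_eq_zero] at this
    exact this
  -- b as a bilinear map
  have inner : ∀ x : G, G →+ M := fun x => AddMonoidHom.mk' (b x) (fun y y' => hbil₂ x y y')
  let Blin : G →ₗ[ℤ] G →ₗ[ℤ] M :=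
    AddMonoidHom.toIntLinearMap
      (AddMonoidHom.mk'
        (fun x => (AddMonoidHom.mk' (b x) (fun y y' => hbil₂ x y y')).toIntLinearMap)
        (fun x x' => LinearMap.ext fun y => hbil₁ x x' y))
  have hBlin : ∀ x y, Blin x y = b x y := fun x y => rfl
  -- basis
  set ι := Module.Free.ChooseBasisIndex ℤ G
  set bG : Module.Basis ι ℤ G := Module.Free.chooseBasis ℤ G with hbG
  letI : LinearOrder ι := IsWellOrder.linearOrder WellOrderingRel
  let tij : ι → ι → M := fun i j =>
    if i < j then b (bG i) (bG j) else if i = j then q (bG i) else 0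
  let T : G →ₗ[ℤ] G →ₗ[ℤ] M := bG.constr ℤ fun i => bG.constr ℤ fun j => tij i j
  have hT : ∀ i j, T (bG i) (bG j) = tij i j := by
    intro i j
    simp [T, Module.Basis.constr_basis]
  have key : Blin = T + T.flip := by
    apply bG.ext; intro i
    apply bG.ext; intro j
    have : Blin (bG i) (bG j) = b (bG i) (bG j) := rfl
    simp only [LinearMap.add_apply, LinearMap.flip_apply, this, hT]
    rcases lt_trichotomy i j with h | h | h
    · simp [tij, h, not_lt.mpr h.le, h.ne']
    · subst h; simp [tij, hdiag]
    · rw [hbsymm]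
      simp [tij, h, not_lt.mpr h.le, h.ne']
  refine ⟨fun x y => T x y, ?_, ?_, ?_⟩
  · intro x x' y; simp only [map_add, LinearMap.add_apply]
  · intro x y y'; simp only [map_add, LinearMap.add_apply]
  · intro x y
    have h := LinearMap.congr_fun (LinearMap.congr_fun key x) y
    simpa [hBlin, hbdef] using h
end

section
/- Let G, M be abelian groups, t : G × G → M a Z-bilinear map, and q : G → M a quadratic form. Then q is polar for t (i.e., q(x+y) - q(x) - q(y) = t(x,y) + t(y,x) for all x, y) if and only if the map x ↦ q(x) - t(x,x) is a group homomorphism G → M taking values in the 2-torsion of M (equivalently, it factors as a homomorphism G/2G → {m ∈ M : 2m = 0}). -/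
/-- Let `t` be ℤ-bilinear and `q` a quadratic form. Then `q` is polar for `t`
iff `x ↦ q(x) - t(x,x)` is a group homomorphism with values in the 2-torsion
of `M` (hence factoring through `G/2G`). -/
theorem stmt_16 {G M : Type*} [AddCommGroup G] [AddCommGroup M]
    (t : G → G → M) (q : G → M)
    (ht₁ : ∀ x x' y : G, t (x + x') y = t x y + t x' y)
    (ht₂ : ∀ x y y' : G, t x (y + y') = t x y + t x y')
    (hneg : ∀ x : G, q (-x) = q x)
    (hbil₁ : ∀ x x' y : G, (q (x + x' + y) - q (x + x') - q y)
        = (q (x + y) - q x - q y) + (q (x' + y) - q x' - q y))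
    (hbil₂ : ∀ x y y' : G, (q (x + (y + y')) - q x - q (y + y'))
        = (q (x + y) - q x - q y) + (q (x + y') - q x - q y')) :
    (∀ x y : G, q (x + y) - q x - q y = t x y + t y x) ↔
    ((∀ x y : G, q (x + y) - t (x + y) (x + y)
        = (q x - t x x) + (q y - t y y)) ∧
      (∀ x : G, (2 : ℤ) • (q x - t x x) = 0)) := by
  have texp : ∀ x y : G, t (x + y) (x + y) = t x x + t x y + t y x + t y y := by
    intro x y
    rw [ht₁, ht₂, ht₂]; abel
  have t0l : ∀ y : G, t 0 y = 0 := by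
    intro y
    have h := ht₁ 0 0 y
    rw [add_zero] at h
    nth_rewrite 1 [← add_zero (t 0 y)] at h
    exact (add_left_cancel h).symm
  have t0r : ∀ x : G, t x 0 = 0 := by
    intro x
    have h := ht₂ x 0 0
    rw [add_zero] at h
    nth_rewrite 1 [← add_zero (t x 0)] at h
    exact (add_left_cancel h).symm
  have tnegl : ∀ x y : G, t (-x) y = - t x y := by
    intro x y
    have h := ht₁ x (-x) y
    rw [add_neg_cancel, t0l] at h
    exact eq_neg_of_add_eq_zero_right h.symm
  have tnegr : ∀ x y : G, t x (-y) = - t x y := by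
    intro x y
    have h := ht₂ x y (-y)
    rw [add_neg_cancel, t0r] at h
    exact eq_neg_of_add_eq_zero_right h.symm
  constructor
  · intro hp
    have hadd : ∀ x y : G, q (x + y) - t (x + y) (x + y)
        = (q x - t x x) + (q y - t y y) := by
      intro x y
      have h := hp x y
      rw [sub_sub, sub_eq_iff_eq_add] at h
      rw [texp, h]; abel
    refine ⟨hadd, ?_⟩
    intro x
    have h0 : q 0 - t 0 0 = 0 := by
      have h := hadd 0 0
      rw [add_zero] at h
      nth_rewrite 1 [← add_zero (q 0 - t 0 0)] at h
      exact (add_left_cancel h).symm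
    have hmx : q (-x) - t (-x) (-x) = q x - t x x := by
      rw [hneg, tnegl, tnegr, neg_neg]
    have h := hadd x (-x)
    rw [add_neg_cancel, h0, hmx] at h
    rw [two_smul]
    exact h.symm
  · rintro ⟨hadd, -⟩ x y
    have h := hadd x y
    rw [texp, sub_eq_iff_eq_add] at h
    rw [h]; abel
end

section
/- Let G, M be abelian groups, t : G × G → M a Z-bilinear form, and q̄ : G → M a group homomorphism whose image consists of 2-torsion elements. Fix a basis (β_i)_{i∈I} of the F_2-vector space G/2G and lifts of the β_i to G. Define c(x,y) := t(x,y) + ∑_{i∈I} x̄_i · ȳ_i · q̄(β_i), where x̄_i, ȳ_i ∈ F_2 are the coordinates of the images of x, y in G/2G with respect to the basis. Then c : G × G → M is Z-bilinear, and hence (h, c) with h ≡ 0 is an abelian 3-cocycle. -/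
/-- Let `t : G × G → M` be ℤ-bilinear and `q̄ : G → M` a homomorphism with
2-torsion values factoring through the quotient map `π : G → G/2G`.  Fix a
basis `(β i)` of the `𝔽₂`-vector space `G/2G` together with lifts of the basis
vectors to `G`.  Then `c(x,y) := t(x,y) + ∑ᵢ x̄ᵢ ȳᵢ q̄(βᵢ)` (with `x̄ᵢ, ȳᵢ ∈ 𝔽₂`
the basis coordinates of the images of `x, y` in `G/2G`) is ℤ-bilinear; hence
`(h, c)` with `h ≡ 0` is an abelian 3-cocycle. -/
theorem stmt_17 {G M V : Type*} [AddCommGroup G] [AddCommGroup M]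
    [AddCommGroup V] [Module (ZMod 2) V] {I : Type*}
    (π : G →+ V) (hπsurj : Function.Surjective π)
    (hπ2 : ∀ x : G, π ((2 : ℤ) • x) = 0)
    (B : Module.Basis I (ZMod 2) V) (lift : I → G) (hlift : ∀ i, π (lift i) = B i)
    (t : G → G → M)
    (ht₁ : ∀ x x' y : G, t (x + x') y = t x y + t x' y)
    (ht₂ : ∀ x y y' : G, t x (y + y') = t x y + t x y')
    (qb : G →+ M) (hqb2 : ∀ x : G, (2 : ℤ) • qb x = 0)
    (c : G → G → M)
    (hc : ∀ x y : G, c x y = t x y +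
      ∑ i ∈ (B.repr (π x)).support,
        ((B.repr (π x)) i * (B.repr (π y)) i).val • qb (lift i)) :
    (∀ x x' y : G, c (x + x') y = c x y + c x' y) ∧
    (∀ x y y' : G, c x (y + y') = c x y + c x y') := by
  classical
  -- for a 2-torsion element, `ZMod 2`-valued scalar multiplication is additive
  have key : ∀ (m : M), (2 : ℤ) • m = 0 → ∀ a b : ZMod 2,
      ((a + b).val) • m = a.val • m + b.val • m := by
    intro m hm a b
    have h2 : (2 : ℕ) • m = 0 := by
      rw [← natCast_zsmul]; exact_mod_cast hm
    have hcases : ∀ a b : ZMod 2,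
        a.val + b.val = (a + b).val ∨ a.val + b.val = (a + b).val + 2 := by decide
    rw [← add_nsmul]
    rcases hcases a b with h | h
    · rw [h]
    · rw [h, add_nsmul, h2, add_zero]
  set f : V → V → M := fun v w =>
    ∑ i ∈ (B.repr v).support, ((B.repr v) i * (B.repr w) i).val • qb (lift i) with hf
  have hext : ∀ (v w : V) (S : Finset I), (B.repr v).support ⊆ S →
      f v w = ∑ i ∈ S, ((B.repr v) i * (B.repr w) i).val • qb (lift i) := by
    intro v w S hS
    refine Finset.sum_subset hS ?_
    intro i _ hi
    rw [Finsupp.notMem_support_iff.mp hi]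
    simp
  have hf1 : ∀ v v' w, f (v + v') w = f v w + f v' w := by
    intro v v' w
    set S := ((B.repr v).support ∪ (B.repr v').support) ∪ (B.repr (v + v')).support
      with hS
    rw [hext (v + v') w S (Finset.subset_union_right),
        hext v w S ((Finset.subset_union_left).trans Finset.subset_union_left),
        hext v' w S ((Finset.subset_union_right).trans Finset.subset_union_left),
        ← Finset.sum_add_distrib]
    refine Finset.sum_congr rfl fun i _ => ?_
    rw [map_add, Finsupp.add_apply, add_mul]
    exact key _ (hqb2 _) _ _
  have hf2 : ∀ v w w', f v (w + w') = f v w + f v w' := by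
    intro v w w'
    rw [hf]
    simp only
    rw [← Finset.sum_add_distrib]
    refine Finset.sum_congr rfl fun i _ => ?_
    rw [map_add, Finsupp.add_apply, mul_add]
    exact key _ (hqb2 _) _ _
  constructor
  · intro x x' y
    rw [hc, hc, hc, ht₁]
    have : (∑ i ∈ (B.repr (π (x + x'))).support,
        ((B.repr (π (x + x'))) i * (B.repr (π y)) i).val • qb (lift i))
        = f (π (x + x')) (π y) := rfl
    rw [this, map_add, hf1]
    show _ = t x y + f (π x) (π y) + (t x' y + f (π x') (π y))
    abel
  · intro x y y'
    rw [hc, hc, hc, ht₂]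
    have : (∑ i ∈ (B.repr (π x)).support,
        ((B.repr (π x)) i * (B.repr (π (y + y'))) i).val • qb (lift i))
        = f (π x) (π (y + y')) := rfl
    rw [this, map_add, hf2]
    show _ = t x y + f (π x) (π y) + (t x y' + f (π x) (π y'))
    abel
end

section
/- Let G, M be abelian groups and q a polar quadratic form, written as q(x) = t(x,x) + q̄(x) with t : G × G → M Z-bilinear and q̄ : G → M a homomorphism into the 2-torsion of M factoring through G/2G. Fix an F_2-basis (β_i)_{i∈I} of G/2G, and define the Z-bilinear form c(x,y) := t(x,y) + ∑_{i∈I} x̄_i · ȳ_i · q̄(β_i), where x̄_i, ȳ_i are the basis coordinates of x, y in G/2G. Then the trace of c recovers q: c(x,x) = q(x) for all x ∈ G. -/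
/-- Let `q` be a polar quadratic form, written `q(x) = t(x,x) + q̄(x)` with `t`
ℤ-bilinear and `q̄` a homomorphism into the 2-torsion of `M` factoring through
the quotient map `π : G → G/2G`.  Fix an `𝔽₂`-basis `(β i)` of `G/2G` with
lifts to `G` and define `c(x,y) := t(x,y) + ∑ᵢ x̄ᵢ ȳᵢ q̄(βᵢ)`.  Then the trace
of `c` recovers `q`: `c(x,x) = q(x)` for all `x`. -/
theorem stmt_18 {G M V : Type*} [AddCommGroup G] [AddCommGroup M]
    [AddCommGroup V] [Module (ZMod 2) V] {I : Type*}
    (π : G →+ V) (hπsurj : Function.Surjective π)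
    (hπ2 : ∀ x : G, π ((2 : ℤ) • x) = 0)
    (B : Module.Basis I (ZMod 2) V) (lift : I → G) (hlift : ∀ i, π (lift i) = B i)
    (t : G → G → M)
    (ht₁ : ∀ x x' y : G, t (x + x') y = t x y + t x' y)
    (ht₂ : ∀ x y y' : G, t x (y + y') = t x y + t x y')
    (qb : G →+ M) (hqb2 : ∀ x : G, (2 : ℤ) • qb x = 0)
    (hqbfactor : ∀ x y : G, π x = π y → qb x = qb y)
    (q : G → M) (hq : ∀ x : G, q x = t x x + qb x)
    (c : G → G → M)
    (hc : ∀ x y : G, c x y = t x y +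
      ∑ i ∈ (B.repr (π x)).support,
        ((B.repr (π x)) i * (B.repr (π y)) i).val • qb (lift i)) :
    ∀ x : G, c x x = q x := by
  intro x
  have hone : ∀ i ∈ (B.repr (π x)).support, (B.repr (π x)) i = 1 := by
    intro i hi
    have h := Finsupp.mem_support_iff.mp hi
    have : ∀ a : ZMod 2, a ≠ 0 → a = 1 := by decide
    exact this _ h
  have hsum : ∑ i ∈ (B.repr (π x)).support,
      ((B.repr (π x)) i * (B.repr (π x)) i).val • qb (lift i)
      = ∑ i ∈ (B.repr (π x)).support, qb (lift i) := by
    refine Finset.sum_congr rfl fun i hi => ?_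
    rw [hone i hi]
    simp [ZMod.val_one]
  have hπx : π (∑ i ∈ (B.repr (π x)).support, lift i) = π x := by
    rw [map_sum]
    simp only [hlift]
    conv_rhs => rw [← B.linearCombination_repr (π x)]
    rw [Finsupp.linearCombination_apply, Finsupp.sum]
    exact Finset.sum_congr rfl fun i hi => by rw [hone i hi, one_smul]
  rw [hc, hq, hsum, ← map_sum, hqbfactor _ _ hπx]
end
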